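/- With the sets D_n defined by the recursive Mex algorithm, for every n ≥ 0 any two distinct elements of D_n ∩ [Mex(D_n), ∞) differ by at least 2. -/

import Mathlib

/-- Minimum excluded value of a set of natural numbers. -/
noncomputable def mex (S : Set ℕ) : ℕ := sInf {m : ℕ | m ∉ S}

/-- Coordinates of a set of triples. -/
def coords (G : Set (ℕ × ℕ × ℕ)) : Set ℕ :=
  {k | ∃ x ∈ G, k = x.1 ∨ k = x.2.1 ∨ k = x.2.2}

/-- Pairwise coordinate differences of a set of triples. -/
def diffs (G : Set (ℕ × ℕ × ℕ)) : Set ℕ :=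
  {d | ∃ x ∈ G, d = x.2.1 - x.1 ∨ d = x.2.2 - x.2.1 ∨ d = x.2.2 - x.1}

/-- One step of the Mex algorithm: the next P-position. -/
noncomputable def step (G : Set (ℕ × ℕ × ℕ)) : ℕ × ℕ × ℕ :=
  let F := coords G
  let D := diffs G
  let a := mex F
  let b := mex ((fun d => a + d) '' D ∪ Set.Icc 1 a ∪ F)
  let c := mex ((fun d => b + d) '' D ∪ Set.Icc 1 b ∪ F)
  (a, b, c)

/-- The sets `G_n` of P-positions computed by the Mex algorithm. -/
noncomputable def Gset : ℕ → Set (ℕ × ℕ × ℕ)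
  | 0 => {(0, 0, 0)}
  | n + 1 => Gset n ∪ {step (Gset n)}

/-- The `n`-th P-position `(v_1(n), v_2(n), v_3(n))`. -/
noncomputable def v : ℕ → ℕ × ℕ × ℕ
  | 0 => (0, 0, 0)
  | n + 1 => step (Gset n)

noncomputable def v1 (n : ℕ) : ℕ := (v n).1
noncomputable def v2 (n : ℕ) : ℕ := (v n).2.1
noncomputable def v3 (n : ℕ) : ℕ := (v n).2.2

/-- `F_n`: the set of coordinates of elements of `G_n`. -/
noncomputable def Fset (n : ℕ) : Set ℕ := coords (Gset n)

/-- `D_n`: the set of pairwise coordinate differences over `G_n`. -/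
noncomputable def Dset (n : ℕ) : Set ℕ := diffs (Gset n)

/-! ### mex lemmas -/

lemma mex_le {S : Set ℕ} {k : ℕ} (h : k ∉ S) : mex S ≤ k := Nat.sInf_le h

lemma mem_of_lt_mex {S : Set ℕ} {k : ℕ} (h : k < mex S) : k ∈ S := by
  by_contra hk
  exact absurd (mex_le hk) (by omega)

lemma mex_notMem {S : Set ℕ} (hS : S.Finite) : mex S ∉ S :=
  Nat.sInf_mem hS.infinite_compl.nonempty

lemma le_mex {S : Set ℕ} (hS : S.Finite) {k : ℕ} (h : ∀ j ≤ k, j ∈ S) : k + 1 ≤ mex S := by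
  by_contra hc
  exact mex_notMem hS (h _ (by omega))

lemma mex_mono {S T : Set ℕ} (hT : T.Finite) (h : S ⊆ T) : mex S ≤ mex T :=
  mex_le (fun hm => mex_notMem hT (h hm))

lemma mex_eq_of {S : Set ℕ} {k : ℕ} (h1 : k ∉ S) (h2 : ∀ j < k, j ∈ S) : mex S = k := by
  refine le_antisymm (mex_le h1) ?_
  by_contra hc
  have hmem : mex S ∉ S := Nat.sInf_mem (⟨k, h1⟩ : {m : ℕ | m ∉ S}.Nonempty)
  exact hmem (h2 _ (by omega))

/-! ### finiteness -/

lemma Gset_finite (n : ℕ) : (Gset n).Finite := by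
  induction n with
  | zero => simp [Gset]
  | succ n ih => rw [Gset]; exact ih.union (Set.finite_singleton _)

lemma coords_finite {G : Set (ℕ × ℕ × ℕ)} (hG : G.Finite) : (coords G).Finite := by
  have h : coords G ⊆ (fun x : ℕ × ℕ × ℕ => x.1) '' G ∪ (fun x : ℕ × ℕ × ℕ => x.2.1) '' G ∪
      (fun x : ℕ × ℕ × ℕ => x.2.2) '' G := by
    rintro k ⟨x, hx, h | h | h⟩
    · exact Or.inl (Or.inl ⟨x, hx, h.symm⟩)
    · exact Or.inl (Or.inr ⟨x, hx, h.symm⟩)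
    · exact Or.inr ⟨x, hx, h.symm⟩
  exact Set.Finite.subset (((hG.image _).union (hG.image _)).union (hG.image _)) h

lemma diffs_finite {G : Set (ℕ × ℕ × ℕ)} (hG : G.Finite) : (diffs G).Finite := by
  have h : diffs G ⊆ (fun x : ℕ × ℕ × ℕ => x.2.1 - x.1) '' G ∪
      (fun x : ℕ × ℕ × ℕ => x.2.2 - x.2.1) '' G ∪ (fun x : ℕ × ℕ × ℕ => x.2.2 - x.1) '' G := by
    rintro k ⟨x, hx, h | h | h⟩
    · exact Or.inl (Or.inl ⟨x, hx, h.symm⟩)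
    · exact Or.inl (Or.inr ⟨x, hx, h.symm⟩)
    · exact Or.inr ⟨x, hx, h.symm⟩
  exact Set.Finite.subset (((hG.image _).union (hG.image _)).union (hG.image _)) h

lemma Fset_finite (n : ℕ) : (Fset n).Finite := coords_finite (Gset_finite n)
lemma Dset_finite (n : ℕ) : (Dset n).Finite := diffs_finite (Gset_finite n)

/-! ### unfolding -/

lemma v1_succ (n : ℕ) : v1 (n+1) = mex (Fset n) := rfl
lemma v2_succ (n : ℕ) :
    v2 (n+1) = mex ((fun d => v1 (n+1) + d) '' Dset n ∪ Set.Icc 1 (v1 (n+1)) ∪ Fset n) := rfl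
lemma v3_succ (n : ℕ) :
    v3 (n+1) = mex ((fun d => v2 (n+1) + d) '' Dset n ∪ Set.Icc 1 (v2 (n+1)) ∪ Fset n) := rfl

lemma v1_zero : v1 0 = 0 := rfl
lemma v2_zero : v2 0 = 0 := rfl
lemma v3_zero : v3 0 = 0 := rfl

lemma Fset_zero : Fset 0 = {0} := by
  ext x
  simp only [Fset, Gset, coords, Set.mem_setOf_eq, Set.mem_singleton_iff]
  constructor
  · rintro ⟨y, hy, h⟩; subst hy; rcases h with h|h|h <;> simpa using h
  · rintro rfl; exact ⟨(0,0,0), rfl, Or.inl rfl⟩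

lemma Dset_zero : Dset 0 = {0} := by
  ext x
  simp only [Dset, Gset, diffs, Set.mem_setOf_eq, Set.mem_singleton_iff]
  constructor
  · rintro ⟨y, hy, h⟩; subst hy; rcases h with h|h|h <;> simpa using h
  · rintro rfl; exact ⟨(0,0,0), rfl, Or.inl rfl⟩

lemma mem_Fset_succ {x n : ℕ} :
    x ∈ Fset (n+1) ↔ x ∈ Fset n ∨ x = v1 (n+1) ∨ x = v2 (n+1) ∨ x = v3 (n+1) := by
  simp only [Fset, Gset, coords, Set.mem_setOf_eq, Set.mem_union, Set.mem_singleton_iff]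
  constructor
  · rintro ⟨y, hy | hy, h⟩
    · exact Or.inl ⟨y, hy, h⟩
    · subst hy
      rcases h with h|h|h
      · exact Or.inr (Or.inl h)
      · exact Or.inr (Or.inr (Or.inl h))
      · exact Or.inr (Or.inr (Or.inr h))
  · rintro (⟨y, hy, h⟩ | h | h | h)
    · exact ⟨y, Or.inl hy, h⟩
    · exact ⟨step (Gset n), Or.inr rfl, Or.inl h⟩
    · exact ⟨step (Gset n), Or.inr rfl, Or.inr (Or.inl h)⟩
    · exact ⟨step (Gset n), Or.inr rfl, Or.inr (Or.inr h)⟩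

lemma mem_Dset_succ {x n : ℕ} :
    x ∈ Dset (n+1) ↔ x ∈ Dset n ∨ x = v2 (n+1) - v1 (n+1) ∨ x = v3 (n+1) - v2 (n+1) ∨
      x = v3 (n+1) - v1 (n+1) := by
  simp only [Dset, Gset, diffs, Set.mem_setOf_eq, Set.mem_union, Set.mem_singleton_iff]
  constructor
  · rintro ⟨y, hy | hy, h⟩
    · exact Or.inl ⟨y, hy, h⟩
    · subst hy
      rcases h with h|h|h
      · exact Or.inr (Or.inl h)
      · exact Or.inr (Or.inr (Or.inl h))
      · exact Or.inr (Or.inr (Or.inr h))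
  · rintro (⟨y, hy, h⟩ | h | h | h)
    · exact ⟨y, Or.inl hy, h⟩
    · exact ⟨step (Gset n), Or.inr rfl, Or.inl h⟩
    · exact ⟨step (Gset n), Or.inr rfl, Or.inr (Or.inl h)⟩
    · exact ⟨step (Gset n), Or.inr rfl, Or.inr (Or.inr h)⟩

lemma Fset_mono' {m n : ℕ} (h : m ≤ n) : Fset m ⊆ Fset n := by
  induction n with
  | zero => simp_all
  | succ n ih =>
    rcases Nat.lt_or_ge m (n+1) with h' | h'
    · exact (ih (by omega)).trans (fun x hx => mem_Fset_succ.2 (Or.inl hx))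
    · have he : m = n+1 := by omega
      subst he; exact le_refl _

lemma Dset_mono' {m n : ℕ} (h : m ≤ n) : Dset m ⊆ Dset n := by
  induction n with
  | zero => simp_all
  | succ n ih =>
    rcases Nat.lt_or_ge m (n+1) with h' | h'
    · exact (ih (by omega)).trans (fun x hx => mem_Dset_succ.2 (Or.inl hx))
    · have he : m = n+1 := by omega
      subst he; exact le_refl _

lemma zero_mem_Fset (n : ℕ) : 0 ∈ Fset n :=
  Fset_mono' (Nat.zero_le n) (by rw [Fset_zero]; rfl)

lemma zero_mem_Dset (n : ℕ) : 0 ∈ Dset n :=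
  Dset_mono' (Nat.zero_le n) (by rw [Dset_zero]; rfl)

lemma v_mem_Fset {k : ℕ} (hk : 1 ≤ k) :
    v1 k ∈ Fset k ∧ v2 k ∈ Fset k ∧ v3 k ∈ Fset k := by
  obtain ⟨j, rfl⟩ : ∃ j, k = j + 1 := ⟨k-1, by omega⟩
  exact ⟨mem_Fset_succ.2 (Or.inr (Or.inl rfl)), mem_Fset_succ.2 (Or.inr (Or.inr (Or.inl rfl))),
    mem_Fset_succ.2 (Or.inr (Or.inr (Or.inr rfl)))⟩

lemma Fset_char : ∀ {n x : ℕ}, x ∈ Fset n →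
    x = 0 ∨ ∃ k, 1 ≤ k ∧ k ≤ n ∧ (x = v1 k ∨ x = v2 k ∨ x = v3 k) := by
  intro n
  induction n with
  | zero => intro x hx; rw [Fset_zero] at hx; exact Or.inl hx
  | succ n ih =>
    intro x hx
    rcases mem_Fset_succ.1 hx with h | h | h | h
    · rcases ih h with h | ⟨k, h1, h2, h3⟩
      · exact Or.inl h
      · exact Or.inr ⟨k, h1, by omega, h3⟩
    · exact Or.inr ⟨n+1, by omega, le_refl _, Or.inl h⟩
    · exact Or.inr ⟨n+1, by omega, le_refl _, Or.inr (Or.inl h)⟩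
    · exact Or.inr ⟨n+1, by omega, le_refl _, Or.inr (Or.inr h)⟩

/-! ### the invariant -/

/-- Facts about step `k` (for `k ≥ 1`). -/
def SF (k : ℕ) : Prop :=
  v1 k + mex (Dset (k-1)) ≤ v2 k ∧
  v2 k ≤ v1 k + mex (Dset (k-1)) + 2 ∧
  (v2 k = v1 k + mex (Dset (k-1)) + 2 → mex (Dset (k-1)) + 1 ∈ Dset (k-1)) ∧
  v3 k = v2 k + mex (Dset (k-1)) ∧
  v2 k + 1 ≤ v1 k + mex (Dset k) ∧
  mex (Dset (k-1)) + 1 ≤ mex (Dset k)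

def GInv (n : ℕ) : Prop :=
  (∀ x ∈ Fset n, x ≤ v3 n) ∧
  (∀ d ∈ Dset n, mex (Dset n) ≤ d → ∃ k, 1 ≤ k ∧ k ≤ n ∧ d = v3 k - v1 k) ∧
  (∀ k, 1 ≤ k → k ≤ n → SF k)

lemma mex_Dset_zero : mex (Dset 0) = 1 := by
  rw [Dset_zero]
  exact mex_eq_of (by simp) (by intro j hj; interval_cases j; rfl)

lemma one_le_mex_Dset (n : ℕ) : 1 ≤ mex (Dset n) :=
  le_mex (Dset_finite n) (fun j hj => by
    have : j = 0 := by omega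
    subst this; exact zero_mem_Dset n)

lemma one_le_mex_Fset (n : ℕ) : 1 ≤ mex (Fset n) :=
  le_mex (Fset_finite n) (fun j hj => by
    have : j = 0 := by omega
    subst this; exact zero_mem_Fset n)

/-- `v1 k < mex (Fset n)` for `1 ≤ k ≤ n`. -/
lemma v1_lt_mex {k n : ℕ} (h1 : 1 ≤ k) (h2 : k ≤ n) : v1 k < mex (Fset n) := by
  obtain ⟨j, rfl⟩ : ∃ j, k = j + 1 := ⟨k-1, by omega⟩
  have hle : v1 (j+1) ≤ mex (Fset n) := by
    rw [v1_succ]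
    exact mex_mono (Fset_finite n) (Fset_mono' (by omega))
  have hne : v1 (j+1) ≠ mex (Fset n) := by
    intro he
    exact mex_notMem (Fset_finite n) (he ▸ Fset_mono' h2 (v_mem_Fset (by omega)).1)
  omega

/-- single-step `v3`-type inequality. -/
lemma step_ineq {k : ℕ} (hk : 1 ≤ k) (hk1 : SF k) (hk2 : SF (k+1)) (hv1 : v1 k < v1 (k+1)) :
    v3 k + 3 ≤ v3 (k+1) ∧ v3 k + v1 (k+1) + 2 ≤ v3 (k+1) + v1 k := by
  obtain ⟨s1, s2, s3, s4, s5, s6⟩ := hk1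
  obtain ⟨t1, t2, t3, t4, t5, t6⟩ := hk2
  simp only [Nat.add_sub_cancel] at t1 t2 t3 t4 t5 t6
  omega


lemma v1_succ_gt {k : ℕ} (hk : 1 ≤ k) : v1 k < v1 (k+1) := by
  rw [v1_succ]
  exact v1_lt_mex hk le_rfl

/-- chained inequalities for `v3` along steps `1 ≤ j < k`. -/
lemma v3_chain {n : ℕ} (hSF : ∀ k, 1 ≤ k → k ≤ n → SF k) :
    ∀ k ≤ n, ∀ j, 1 ≤ j → j < k → v3 j + 3 ≤ v3 k ∧ v3 j + v1 k + 2 ≤ v3 k + v1 j := by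
  intro k
  induction k with
  | zero => intro _ j _ h; omega
  | succ k ih =>
    intro hk j hj hjk
    have hstep : 1 ≤ k → v3 k + 3 ≤ v3 (k+1) ∧ v3 k + v1 (k+1) + 2 ≤ v3 (k+1) + v1 k :=
      fun h1 => step_ineq h1 (hSF k h1 (by omega)) (hSF (k+1) (by omega) hk) (v1_succ_gt h1)
    rcases Nat.lt_or_ge j k with h | h
    · have h1 : 1 ≤ k := by omega
      have hi := ih (by omega) j hj h
      have hs := hstep h1
      have hv := v1_succ_gt h1
      constructor
      · omega
      · omega
    · have he : j = k := by omega
      subst he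
      exact hstep hj
lemma v1_le_v3_of_SF {k : ℕ} (h : SF k) : v1 k ≤ v3 k := by
  obtain ⟨s1, s2, s3, s4, s5, s6⟩ := h; omega

lemma gapD {n : ℕ}
    (hA2 : ∀ d ∈ Dset n, mex (Dset n) ≤ d → ∃ k, 1 ≤ k ∧ k ≤ n ∧ d = v3 k - v1 k)
    (hSF : ∀ k, 1 ≤ k → k ≤ n → SF k) :
    ∀ x ∈ Dset n, ∀ y ∈ Dset n, mex (Dset n) ≤ x → mex (Dset n) ≤ y → x ≠ y →
      x + 2 ≤ y ∨ y + 2 ≤ x := by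
  intro x hx y hy hmx hmy hxy
  obtain ⟨j, hj1, hj2, rfl⟩ := hA2 x hx hmx
  obtain ⟨k, hk1, hk2, rfl⟩ := hA2 y hy hmy
  have hvj : v1 j ≤ v3 j := v1_le_v3_of_SF (hSF j hj1 hj2)
  have hvk : v1 k ≤ v3 k := v1_le_v3_of_SF (hSF k hk1 hk2)
  rcases lt_trichotomy j k with h | h | h
  · have := (v3_chain hSF k hk2 j hj1 h).2; omega
  · subst h; exact absurd rfl hxy
  · have := (v3_chain hSF j hj2 k hk1 h).2; omega

theorem ginv_all : ∀ n, GInv n := by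
  intro n
  induction n using Nat.strong_induction_on with
  | _ n ih =>
    rcases n with _ | n
    · refine ⟨?_, ?_, ?_⟩
      · intro x hx
        rw [Fset_zero] at hx
        simp only [Set.mem_singleton_iff] at hx
        subst hx
        exact Nat.zero_le _
      · intro d hd hmd
        rw [Dset_zero] at hd
        simp only [Set.mem_singleton_iff] at hd
        rw [mex_Dset_zero] at hmd
        omega
      · intro k h1 h2; omega
    · -- inductive step
      obtain ⟨hA1, hA2, hSF⟩ := ih n (by omega)
      have hFfin := Fset_finite n
      have hDfin := Dset_finite n
      set m := mex (Dset n) with hm_def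
      set a := v1 (n+1) with ha_def
      set b := v2 (n+1) with hb_def
      set c := v3 (n+1) with hc_def
      have hm1 : 1 ≤ m := one_le_mex_Dset n
      have ha1 : 1 ≤ a := by rw [ha_def, v1_succ]; exact one_le_mex_Fset n
      have haF : a ∉ Fset n := by rw [ha_def, v1_succ]; exact mex_notMem hFfin
      have hmD : m ∉ Dset n := by rw [hm_def]; exact mex_notMem hDfin
      have hltm : ∀ j, j < m → j ∈ Dset n := fun j hj => mem_of_lt_mex (hm_def ▸ hj)
      have hamex : a = mex (Fset n) := by rw [ha_def, v1_succ]
      -- the blocking set for b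
      set Sb := (fun d => a + d) '' Dset n ∪ Set.Icc 1 a ∪ Fset n with hSb_def
      have hSbfin : Sb.Finite :=
        ((hDfin.image _).union (Set.finite_Icc 1 a)).union hFfin
      have hb_eq : b = mex Sb := by rw [hb_def, v2_succ, ← ha_def, ← hSb_def]
      have hSbF : ∀ x ∈ Fset n, x ∈ Sb := fun x hx => by
        rw [hSb_def]; exact Set.mem_union_right _ hx
      have hSbI : ∀ x, 1 ≤ x → x ≤ a → x ∈ Sb := fun x h1 h2 => by
        rw [hSb_def]
        exact Set.mem_union_left _ (Set.mem_union_right _ (Set.mem_Icc.2 ⟨h1, h2⟩))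
      have hSbD : ∀ d ∈ Dset n, a + d ∈ Sb := fun d hd => by
        rw [hSb_def]
        exact Set.mem_union_left _ (Set.mem_union_left _ ⟨d, hd, rfl⟩)
      have hSbcase : ∀ x ∈ Sb, (∃ d ∈ Dset n, a + d = x) ∨ (1 ≤ x ∧ x ≤ a) ∨ x ∈ Fset n := by
        intro x hx
        rw [hSb_def] at hx
        rcases hx with (⟨d, hd, hdx⟩ | h) | h
        · exact Or.inl ⟨d, hd, hdx⟩
        · exact Or.inr (Or.inl (Set.mem_Icc.1 h))
        · exact Or.inr (Or.inr h)
      have hblock : ∀ j, j < a + m → j ∈ Sb := by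
        intro j hj
        rcases Nat.eq_zero_or_pos j with rfl | hj0
        · exact hSbF 0 (zero_mem_Fset n)
        rcases le_or_gt j a with h | h
        · exact hSbI j hj0 h
        · have hd : j - a ∈ Dset n := hltm _ (by omega)
          have : a + (j - a) = j := by omega
          exact this ▸ hSbD _ hd
      have hbge : a + m ≤ b := by
        rw [hb_eq]
        have := le_mex hSbfin (k := a + m - 1) (fun j hj => hblock j (by omega))
        omega
      -- window lemma
      have hOnlyC : ∀ x ∈ Fset n, a + m ≤ x → ∃ k, 1 ≤ k ∧ k ≤ n ∧ x = v3 k := by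
        intro x hx hax
        rcases Fset_char hx with rfl | ⟨k, hk1, hk2, hk3 | hk3 | hk3⟩
        · omega
        · have hlt := v1_lt_mex hk1 hk2
          rw [← hamex] at hlt
          omega
        · obtain ⟨s1, s2, s3, s4, s5, s6⟩ := hSF k hk1 hk2
          have hlt := v1_lt_mex hk1 hk2
          rw [← hamex] at hlt
          have hMk : mex (Dset k) ≤ m := by
            rw [hm_def]; exact mex_mono hDfin (Dset_mono' hk2)
          omega
        · exact ⟨k, hk1, hk2, hk3⟩
      have hW : a + m ∈ Fset n → a + m + 1 ∉ Fset n ∧ a + m + 2 ∉ Fset n := by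
        intro hmemF
        obtain ⟨j, hj1, hj2, hj3⟩ := hOnlyC _ hmemF le_rfl
        have key : ∀ i, 1 ≤ i → i ≤ 2 → a + m + i ∉ Fset n := by
          intro i hi1 hi2 hcon
          obtain ⟨k, hk1, hk2, hk3⟩ := hOnlyC _ hcon (by omega)
          rcases lt_trichotomy j k with h | h | h
          · have := (v3_chain hSF k hk2 j hj1 h).1; omega
          · subst h; omega
          · have := (v3_chain hSF j hj2 k hk1 h).1; omega
        exact ⟨key 1 (by omega) (by omega), key 2 (by omega) (by omega)⟩
      have hgap12 : ¬(m + 1 ∈ Dset n ∧ m + 2 ∈ Dset n) := by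
        rintro ⟨h1, h2⟩
        rcases gapD hA2 hSF (m+1) h1 (m+2) h2 (by omega) (by omega) (by omega) with h | h <;>
          omega
      -- determination of b
      have hpcases : b = a + m ∨ b = a + m + 1 ∨ (b = a + m + 2 ∧ m + 1 ∈ Dset n) := by
        by_cases hF : a + m ∈ Fset n
        · obtain ⟨hW1, hW2⟩ := hW hF
          by_cases hD1 : m + 1 ∈ Dset n
          · right; right
            refine ⟨?_, hD1⟩
            rw [hb_eq]
            apply mex_eq_of
            · intro hcon
              rcases hSbcase _ hcon with ⟨d, hd, hdx⟩ | h | h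
              · have hdm : d = m + 2 := by omega
                exact hgap12 ⟨hD1, hdm ▸ hd⟩
              · omega
              · exact hW2 h
            · intro j hj
              rcases Nat.lt_or_ge j (a + m) with h | h
              · exact hblock j h
              · rcases Nat.lt_or_ge j (a + m + 1) with h' | h'
                · have : j = a + m := by omega
                  exact this ▸ hSbF _ hF
                · have hj' : a + (m + 1) = j := by omega
                  exact hj' ▸ hSbD _ hD1
          · right; left
            rw [hb_eq]
            apply mex_eq_of
            · intro hcon
              rcases hSbcase _ hcon with ⟨d, hd, hdx⟩ | h | h
              · have hdm : d = m + 1 := by omega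
                exact hD1 (hdm ▸ hd)
              · omega
              · exact hW1 h
            · intro j hj
              rcases Nat.lt_or_ge j (a + m) with h | h
              · exact hblock j h
              · have : j = a + m := by omega
                exact this ▸ hSbF _ hF
        · left
          rw [hb_eq]
          apply mex_eq_of
          · intro hcon
            rcases hSbcase _ hcon with ⟨d, hd, hdx⟩ | h | h
            · have hdm : d = m := by omega
              exact hmD (hdm ▸ hd)
            · omega
            · exact hF h
          · exact hblock
      have hb1 : 1 ≤ b := by omega
      -- the blocking set for c
      set Sc := (fun d => b + d) '' Dset n ∪ Set.Icc 1 b ∪ Fset n with hSc_def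
      have hScfin : Sc.Finite :=
        ((hDfin.image _).union (Set.finite_Icc 1 b)).union hFfin
      have hc_eq : c = mex Sc := by rw [hc_def, v3_succ, ← hb_def, ← hSc_def]
      have hScF : ∀ x ∈ Fset n, x ∈ Sc := fun x hx => by
        rw [hSc_def]; exact Set.mem_union_right _ hx
      have hScI : ∀ x, 1 ≤ x → x ≤ b → x ∈ Sc := fun x h1 h2 => by
        rw [hSc_def]
        exact Set.mem_union_left _ (Set.mem_union_right _ (Set.mem_Icc.2 ⟨h1, h2⟩))
      have hScD : ∀ d ∈ Dset n, b + d ∈ Sc := fun d hd => by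
        rw [hSc_def]
        exact Set.mem_union_left _ (Set.mem_union_left _ ⟨d, hd, rfl⟩)
      have hSccase : ∀ x ∈ Sc, (∃ d ∈ Dset n, b + d = x) ∨ (1 ≤ x ∧ x ≤ b) ∨ x ∈ Fset n := by
        intro x hx
        rw [hSc_def] at hx
        rcases hx with (⟨d, hd, hdx⟩ | h) | h
        · exact Or.inl ⟨d, hd, hdx⟩
        · exact Or.inr (Or.inl (Set.mem_Icc.1 h))
        · exact Or.inr (Or.inr h)
      have hcblock : ∀ j, j < b + m → j ∈ Sc := by
        intro j hj
        rcases Nat.eq_zero_or_pos j with rfl | hj0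
        · exact hScF 0 (zero_mem_Fset n)
        rcases le_or_gt j b with h | h
        · exact hScI j hj0 h
        · have hd : j - b ∈ Dset n := hltm _ (by omega)
          have : b + (j - b) = j := by omega
          exact this ▸ hScD _ hd
      have hv3n_lt : v3 n < b + m := by
        rcases Nat.eq_zero_or_pos n with rfl | hn
        · rw [v3_zero]; omega
        · obtain ⟨s1, s2, s3, s4, s5, s6⟩ := hSF n hn le_rfl
          have hlt := v1_lt_mex hn le_rfl
          rw [← hamex] at hlt
          omega
      have hc_val : c = b + m := by
        rw [hc_eq]
        apply mex_eq_of
        · intro hcon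
          rcases hSccase _ hcon with ⟨d, hd, hdx⟩ | h | h
          · have hdm : d = m := by omega
            exact hmD (hdm ▸ hd)
          · omega
          · have := hA1 _ h; omega
        · exact hcblock
      -- new mex facts
      have hm'1 : m + 1 ≤ mex (Dset (n+1)) := by
        apply le_mex (Dset_finite (n+1))
        intro j hj
        rcases Nat.lt_or_ge j m with h | h
        · exact mem_Dset_succ.2 (Or.inl (hltm j h))
        · have hjm : j = m := by omega
          refine mem_Dset_succ.2 (Or.inr (Or.inr (Or.inl ?_)))
          omega
      have hm'p : b + 1 ≤ a + mex (Dset (n+1)) := by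
        have hall : ∀ j ≤ b - a, j ∈ Dset (n+1) := by
          intro j hj
          rcases Nat.lt_or_ge j m with h | h
          · exact mem_Dset_succ.2 (Or.inl (hltm j h))
          rcases Nat.eq_or_lt_of_le h with h' | h'
          · refine mem_Dset_succ.2 (Or.inr (Or.inr (Or.inl ?_)))
            rw [← hb_def, ← hc_def]
            omega
          rcases hpcases with hp | hp | ⟨hp, hD1⟩
          · omega
          · have : j = m + 1 := by omega
            refine mem_Dset_succ.2 (Or.inr (Or.inl ?_))
            omega
          · rcases Nat.eq_or_lt_of_le h' with h'' | h''
            · exact mem_Dset_succ.2 (Or.inl (h'' ▸ hD1))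
            · have : j = m + 2 := by omega
              refine mem_Dset_succ.2 (Or.inr (Or.inl ?_))
              rw [← hb_def, ← ha_def]
              omega
        have := le_mex (Dset_finite (n+1)) hall
        omega
      have hSFn1 : SF (n+1) := by
        rw [SF]
        simp only [Nat.add_sub_cancel]
        refine ⟨by omega, by omega, ?_, by omega, by omega, by omega⟩
        intro he
        rcases hpcases with hp | hp | ⟨hp, hD1⟩
        · omega
        · omega
        · exact hD1
      refine ⟨?_, ?_, ?_⟩
      · -- coordinate bound
        intro x hx
        rcases mem_Fset_succ.1 hx with h | h | h | h
        · have hh := hA1 x h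
          omega
        · omega
        · omega
        · omega
      · -- large differences are r-values
        intro d hd hmd
        rcases mem_Dset_succ.1 hd with h | h | h | h
        · have hmn : m ≤ d := by omega
          obtain ⟨k, hk1, hk2, hk3⟩ := hA2 d h hmn
          exact ⟨k, hk1, by omega, hk3⟩
        · exfalso; omega
        · exfalso; omega
        · exact ⟨n+1, by omega, le_rfl, h⟩
      · -- step facts
        intro k hk1 hk2
        rcases Nat.lt_or_ge k (n+1) with h | h
        · exact hSF k hk1 (by omega)
        · have : k = n + 1 := by omega
          exact this ▸ hSFn1

theorem stmt15 : ∀ n : ℕ, ∀ a ∈ Dset n, ∀ b ∈ Dset n,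
    mex (Dset n) ≤ a → mex (Dset n) ≤ b → a ≠ b → 2 ≤ |(a : ℤ) - b| := by
  intro n a ha b hb hma hmb hab
  obtain ⟨hA1, hA2, hSF⟩ := ginv_all n
  rcases gapD hA2 hSF a ha b hb hma hmb hab with h | h
  · exact le_abs.2 (Or.inr (by push_cast; omega))
  · exact le_abs.2 (Or.inl (by push_cast; omega))
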